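/- Let N be a planar nearring with a nonzero distributive element. Then for every zero multiplier m and every non-zero-multiplier a ∈ N, the elements m + a and a are equivalent multipliers, i.e., φ_{m+a} = φ_a. -/

import Mathlib

class RightNearring (N : Type*) extends AddGroup N, Mul N where
  mul_assoc : ∀ a b c : N, a * b * c = a * (b * c)
  right_distrib : ∀ a b c : N, (a + b) * c = a * c + b * c

/-- `a` and `b` are equivalent multipliers: `x*a = x*b` for all `x`. -/
def EquivMult {N : Type*} [Mul N] (a b : N) : Prop := ∀ x : N, x * a = x * b

class PlanarNearring (N : Type*) extends RightNearring N where
  three_classes : ∃ a b c : N, ¬ EquivMult a b ∧ ¬ EquivMult b c ∧ ¬ EquivMult a c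
  planar : ∀ a b c : N, ¬ EquivMult a b → ∃! x : N, x * a = x * b + c

/-- The set of distributive elements of a right nearring. -/
def DSet (N : Type*) [RightNearring N] : Set N :=
  {d | ∀ a b : N, d * (a + b) = d * a + d * b}

/-- The set of zero multipliers of a right nearring. -/
def ZM (N : Type*) [RightNearring N] : Set N := {n | ∀ a : N, a * n = 0}

/-- The generalized centre. -/
def GC (N : Type*) [RightNearring N] : Set N := {n | ∀ d ∈ DSet N, n * d = d * n}

/-- The orbit of `d` under `Φ`, together with `0`. -/
def orbitZ (Φ : Type*) {N : Type*} [SMul Φ N] [Zero N] (d : N) : Set N :=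
  {x | x = 0 ∨ ∃ φ : Φ, φ • d = x}

/-- A planar nearring presented by a fixed point free automorphism group `Φ`,
orbit representatives `R` and zero-multiplier representatives `M ⊆ R`. -/
structure FerreroStructure (Φ N : Type*) [Group Φ] [PlanarNearring N]
    [DistribMulAction Φ N] where
  fpf : ∀ φ : Φ, φ ≠ 1 → ∀ n : N, φ • n = n → n = 0
  reg : ∀ φ : Φ, φ ≠ 1 → Function.Bijective (fun n : N => -n + φ • n)
  R : Set N
  M : Set N
  M_sub : M ⊆ R
  zero_not_mem : (0 : N) ∉ R
  rep : N → N
  aut : N → Φ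
  rep_mem : ∀ n : N, n ≠ 0 → rep n ∈ R
  decomp : ∀ n : N, n ≠ 0 → aut n • rep n = n
  unique : ∀ n : N, n ≠ 0 → ∀ r ∈ R, ∀ φ : Φ, φ • r = n → r = rep n ∧ φ = aut n
  mul_eq : ∀ a b : N, b ≠ 0 → rep b ∉ M → a * b = aut b • a
  mul_zm : ∀ a b : N, b ≠ 0 → rep b ∈ M → a * b = 0

/-- if `N` has a nonzero distributive element then for every zero multiplier
`m` and every non zero multiplier `a`, `m + a` and `a` are equivalent multipliers,
i.e. `φ_{m+a} = φ_a`. -/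
theorem stmt8 {Φ N : Type*} [Group Φ] [PlanarNearring N] [DistribMulAction Φ N]
    (S : FerreroStructure Φ N) (hD : ∃ d ∈ DSet N, d ≠ 0)
    (m a : N) (hm : m ∈ ZM N) (ha : a ∉ ZM N) :
    EquivMult (m + a) a ∧ m + a ≠ 0 ∧ S.aut (m + a) = S.aut a := by
  obtain ⟨d, hd, hd0⟩ := hD
  -- left zero: 0 * x = 0
  have lzero : ∀ x : N, (0 : N) * x = 0 := by
    intro x
    have h := RightNearring.right_distrib (0 : N) 0 x
    rw [add_zero] at h
    exact left_eq_add.mp h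
  -- zero symmetry: x * 0 = 0
  have zsym : ∀ x : N, x * (0 : N) = 0 := by
    intro x
    obtain ⟨p, q, r, hpq, _, _⟩ := PlanarNearring.three_classes (N := N)
    obtain ⟨u, hu, huniq⟩ := PlanarNearring.planar p q (0 : N) hpq
    have h0 : (0 : N) * p = 0 * q + 0 := by rw [lzero, lzero, add_zero]
    have hy : (x * 0) * p = (x * 0) * q + 0 := by
      rw [RightNearring.mul_assoc, RightNearring.mul_assoc, lzero, lzero, add_zero]
    rw [huniq _ hy, huniq _ h0]
  -- smul by group element preserves nonzero-ness
  have smul_ne : ∀ (φ : Φ) (x : N), x ≠ 0 → φ • x ≠ 0 := by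
    intro φ x hx h
    apply hx
    have := congrArg (fun y => φ⁻¹ • y) h
    simpa [smul_zero] using this
  have ha0 : a ≠ 0 := by
    intro h; apply ha; intro x; rw [h]; exact zsym x
  have hrepa : S.rep a ∉ S.M := by
    intro hM; apply ha; intro x; exact S.mul_zm x a ha0 hM
  have hda : d * a = S.aut a • d := S.mul_eq d a ha0 hrepa
  have hda0 : d * a ≠ 0 := hda ▸ smul_ne _ _ hd0
  -- d * (m + a) = d * a
  have key : d * (m + a) = d * a := by
    rw [hd m a, hm d, zero_add]
  have hma0 : m + a ≠ 0 := by
    intro h; rw [h, zsym] at key; exact hda0 key.symm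
  have hrepma : S.rep (m + a) ∉ S.M := by
    intro hM
    rw [S.mul_zm d (m + a) hma0 hM] at key
    exact hda0 key.symm
  have hdma : d * (m + a) = S.aut (m + a) • d := S.mul_eq d (m + a) hma0 hrepma
  have haut : S.aut (m + a) = S.aut a := by
    by_contra hne
    have hne1 : (S.aut a)⁻¹ * S.aut (m + a) ≠ 1 := by
      intro h; exact hne (by rw [inv_mul_eq_one] at h; exact h.symm)
    have hfix : ((S.aut a)⁻¹ * S.aut (m + a)) • d = d := by
      rw [mul_smul, ← hdma, key, hda, inv_smul_smul]
    exact hd0 (S.fpf _ hne1 d hfix)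
  refine ⟨?_, hma0, haut⟩
  intro x
  rw [S.mul_eq x (m + a) hma0 hrepma, S.mul_eq x a ha0 hrepa, haut]
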